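/- arXiv:1808.09738 — 3 statements merged into one kernel-verified Lean document; each statement's English description precedes it below -/
import Mathlib

section
/- Let 𝒳 be a non-trivial well-pointed coherent category in which the unique morphism X → 1 is a retraction for every X ≇ 0, and assume 𝒳 is mono-complete. Then the functor of points pt : 𝒳 → Set lifts to a faithful functor Spec : 𝒳 → Top into the category of topological spaces and continuous maps: for every object X, the closed sets of Spec X are the fixed points of the closure operator cl on the power set of pt(X), and for every morphism f : X → Y the function pt f : Spec X → Spec Y is continuous. -/
open CategoryTheory CategoryTheory.Limits Opposite

universe w' w v u

namespace Paper

variable {C : Type u} [Category.{v} C]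

/-- "X ≇ 0": the object `X` is not initial. -/
def NonInitial (X : C) : Prop := IsInitial X → False

/-- The category is non-trivial: `0 ≇ 1`, i.e. no object is both initial and terminal. -/
def NonTrivialCat (C : Type u) [Category.{v} C] : Prop :=
  ∀ X : C, IsInitial X → IsTerminal X → False

section Terminal
variable (C) [HasTerminal C]

/-- The category is well-pointed: the functor of points `pt = Hom(1, -)` is faithful. -/
def WellPointed : Prop :=
  ∀ ⦃X Y : C⦄ (f g : X ⟶ Y), (∀ p : ⊤_ C ⟶ X, p ≫ f = p ≫ g) → f = g

/-- The unique morphism `X ⟶ 1` is a retraction for every `X ≇ 0`. -/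
def EnoughPoints : Prop :=
  ∀ X : C, NonInitial X → Nonempty (SplitEpi (terminal.from X))

end Terminal

/-- `b` is the bottom element of `Sub(X)`. -/
def IsBotIn {X : C} (b : Subobject X) : Prop := ∀ S : Subobject X, b ≤ S

/-- `S` is an atom of the subobject lattice `Sub(X)`. -/
def IsAtomIn {X : C} (S : Subobject X) : Prop :=
  ¬ IsBotIn S ∧ ∀ T : Subobject X, T < S → IsBotIn T

/-- `Sub(X)` is atomic: every subobject is the supremum of the atoms below it. -/
def AtomicSubobjects (X : C) : Prop :=
  ∀ S : Subobject X, IsLUB {A : Subobject X | IsAtomIn A ∧ A ≤ S} S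

/-- `S` is a complemented subobject: it has a complement `T` with `S ⊓ T = ⊥`, `S ⊔ T = ⊤`. -/
def IsComplementedSub {X : C} (S : Subobject X) : Prop :=
  ∃ T m : Subobject X, IsGLB {S, T} m ∧ IsBotIn m ∧ IsLUB {S, T} ⊤

/-- A (non-empty) filter of the Boolean center `B(X)` of `Sub(X)`. -/
structure CenterFilter (X : C) where
  carrier : Set (Subobject X)
  mem_complemented : ∀ S ∈ carrier, IsComplementedSub S
  nonempty : carrier.Nonempty
  inf_mem : ∀ S ∈ carrier, ∀ T ∈ carrier, ∀ m : Subobject X, IsGLB {S, T} m → m ∈ carrier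
  mem_of_le : ∀ S ∈ carrier, ∀ T : Subobject X, IsComplementedSub T → S ≤ T → T ∈ carrier

theorem CenterFilter.ext' {X : C} {F G : CenterFilter X} (h : F.carrier = G.carrier) : F = G := by
  cases F; cases G; cases h; rfl

/-- Filters of the Boolean center, ordered by reverse inclusion. -/
instance (X : C) : PartialOrder (CenterFilter X) where
  le F G := G.carrier ⊆ F.carrier
  le_refl _ := subset_rfl
  le_trans _ _ _ h1 h2 := fun _ hx => h1 (h2 hx)
  le_antisymm _ _ h1 h2 := CenterFilter.ext' (Set.Subset.antisymm h2 h1)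

/-- An object `X` is filtral if `Sub(X)` is isomorphic, as a lattice, to the lattice of
non-empty filters of the Boolean center of `Sub(X)`. -/
def FiltralObject (X : C) : Prop :=
  Nonempty (Subobject X ≃o CenterFilter X)

/-- A category is filtral if every object is covered by a filtral one. -/
def Filtral (C : Type u) [Category.{v} C] : Prop :=
  ∀ Y : C, ∃ (X : C) (f : X ⟶ Y), Nonempty (RegularEpi f) ∧ FiltralObject X

/-- `Sub(X)` is a complete lattice (every subset has an infimum). -/
def MonoCompleteAt (X : C) : Prop :=
  ∀ s : Set (Subobject X), ∃ m : Subobject X, IsGLB s m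

/-- The category is mono-complete: every subobject poset is a complete lattice. -/
def MonoComplete (C : Type u) [Category.{v} C] : Prop := ∀ X : C, MonoCompleteAt X

section Points
variable [HasTerminal C]

/-- `Vs S` is the set of points of `X` factoring through the subobject `S`. -/
def Vs {X : C} (S : Subobject X) : Set (⊤_ C ⟶ X) := {p | S.Factors p}

open Classical in
/-- `Cg T` is the smallest subobject of `X` through which every point in `T` factors
(defined whenever the relevant infimum exists). -/
noncomputable def Cg {X : C} (T : Set (⊤_ C ⟶ X)) : Subobject X :=
  if h : ∃ m : Subobject X, IsGLB {S : Subobject X | ∀ p ∈ T, S.Factors p} m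
  then h.choose else ⊤

/-- The closure operator `cl = Vs ∘ Cg` on the power set of `pt X`. -/
noncomputable def cl {X : C} (T : Set (⊤_ C ⟶ X)) : Set (⊤_ C ⟶ X) := Vs (Cg T)

end Points

/-- Images are stable under pullback (together with finite limits and images, this is
the definition of a regular category). -/
class StableImages (C : Type u) [Category.{v} C] [HasFiniteLimits C] [HasImages C] : Prop where
  image_pullback : ∀ {X Y Z : C} (f : X ⟶ Y) (g : Z ⟶ Y),
    (Subobject.pullback g).obj (imageSubobject f) = imageSubobject (pullback.snd f g)

/-- The extra structure of a coherent category: each `Sub(X)` has finite joins and these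
are preserved by the pullback functors. -/
class CoherentJoins (C : Type u) [Category.{v} C] [HasPullbacks C] : Prop where
  exists_bot : ∀ X : C, ∃ b : Subobject X, IsBotIn b
  exists_sup : ∀ {X : C} (S T : Subobject X), ∃ U : Subobject X, IsLUB {S, T} U
  pullback_bot : ∀ {X Y : C} (f : X ⟶ Y) (b : Subobject Y),
    IsBotIn b → IsBotIn ((Subobject.pullback f).obj b)
  pullback_sup : ∀ {X Y : C} (f : X ⟶ Y) (S T U : Subobject Y), IsLUB {S, T} U →
    IsLUB {(Subobject.pullback f).obj S, (Subobject.pullback f).obj T}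
      ((Subobject.pullback f).obj U)

/-- An internal equivalence relation: a jointly-monic pair which is reflexive, symmetric and
transitive (expressed via generalised elements). -/
structure IsEquivRelPair {R X : C} (r₁ r₂ : R ⟶ X) : Prop where
  jointlyMono : ∀ {Z : C} (a b : Z ⟶ R), a ≫ r₁ = b ≫ r₁ → a ≫ r₂ = b ≫ r₂ → a = b
  refl : ∀ {Z : C} (a : Z ⟶ X), ∃ h : Z ⟶ R, h ≫ r₁ = a ∧ h ≫ r₂ = a
  symm : ∀ {Z : C} (a b : Z ⟶ X), (∃ h : Z ⟶ R, h ≫ r₁ = a ∧ h ≫ r₂ = b) →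
    ∃ h : Z ⟶ R, h ≫ r₁ = b ∧ h ≫ r₂ = a
  trans : ∀ {Z : C} (a b c : Z ⟶ X), (∃ h : Z ⟶ R, h ≫ r₁ = a ∧ h ≫ r₂ = b) →
    (∃ h : Z ⟶ R, h ≫ r₁ = b ∧ h ≫ r₂ = c) →
    ∃ h : Z ⟶ R, h ≫ r₁ = a ∧ h ≫ r₂ = c

/-- Every internal equivalence relation is effective: it is the kernel pair of its
coequaliser. -/
def EffectiveEquivRels (C : Type u) [Category.{v} C] : Prop :=
  ∀ {R X : C} (r₁ r₂ : R ⟶ X), IsEquivRelPair r₁ r₂ →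
    ∃ (Y : C) (q : X ⟶ Y) (w : r₁ ≫ q = r₂ ≫ q),
      Nonempty (IsColimit (Cofork.ofπ q w)) ∧ Nonempty (IsLimit (PullbackCone.mk r₁ r₂ w))

/-- An object is decidable if its diagonal is a complemented subobject of `X ⨯ X`. -/
def DecidableObj [HasBinaryProducts C] (X : C) : Prop :=
  ∃ (Y : C) (g : Y ⟶ X ⨯ X), Nonempty (IsColimit (BinaryCofan.mk (diag X) g))

/-- An object is pro-decidable if it is a codirected (cofiltered) limit of decidable objects. -/
def ProDecidableObj [HasBinaryProducts C] (X : C) : Prop :=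
  ∃ (J : Type v) (_ : SmallCategory J) (_ : IsCofiltered J) (D : J ⥤ C) (c : Cone D),
    (∀ j, DecidableObj (D.obj j)) ∧ Nonempty (IsLimit c) ∧ Nonempty (c.pt ≅ X)



section AuxLemmas

theorem point_mono [HasTerminal C] {X : C} (p : ⊤_ C ⟶ X) : Mono p :=
  ⟨fun g h _ => terminalIsTerminal.hom_ext g h⟩

theorem pullback_obj_mk [HasPullbacks C] {A X W : C} (f : A ⟶ X) (m : W ⟶ X) [Mono m] :
    (Subobject.pullback f).obj (Subobject.mk m) = Subobject.mk (pullback.snd m f) :=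
  Quotient.sound' ⟨MonoOver.isoMk (Iso.refl _) (by simp)⟩

theorem factors_pullback_iff [HasPullbacks C] {A X Z : C} (f : A ⟶ X) (S : Subobject X)
    (g : Z ⟶ A) : ((Subobject.pullback f).obj S).Factors g ↔ S.Factors (g ≫ f) := by
  refine Subobject.ind (fun S => ((Subobject.pullback f).obj S).Factors g ↔ S.Factors (g ≫ f)) ?_ S
  intro W m hm
  rw [pullback_obj_mk, Subobject.mk_factors_iff, Subobject.mk_factors_iff]
  simp only [MonoOver.Factors, MonoOver.mk_arrow]
  constructor
  · rintro ⟨h, hh⟩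
    refine ⟨h ≫ pullback.fst m f, ?_⟩
    subst hh
    exact (Category.assoc _ _ _).trans ((congrArg (fun k => h ≫ k) pullback.condition).trans (Category.assoc _ _ _).symm)
  · rintro ⟨h, hh⟩
    exact ⟨pullback.lift h g (by simpa using hh), pullback.lift_snd _ _ _⟩

theorem eq_top_of_factors_id {A : C} (V : Subobject A) (h : V.Factors (𝟙 A)) : V = ⊤ := by
  have hk := V.factorThru_arrow (𝟙 A) h
  have h2 : V.arrow ≫ V.factorThru (𝟙 A) h = 𝟙 (V : C) := by
    rw [← cancel_mono V.arrow, Category.assoc, hk, Category.comp_id, Category.id_comp]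
  haveI : IsIso V.arrow := ⟨V.factorThru (𝟙 A) h, h2, hk⟩
  rw [← Subobject.mk_arrow V]
  exact Subobject.mk_eq_top_of_isIso _

section WithLimits
variable [HasFiniteLimits C]

theorem isGLB_cg {X : C} (hmc : MonoCompleteAt X) (T : Set (⊤_ C ⟶ X)) :
    IsGLB {S : Subobject X | ∀ p ∈ T, S.Factors p} (Cg T) := by
  have h : ∃ m : Subobject X, IsGLB {S : Subobject X | ∀ p ∈ T, S.Factors p} m := hmc _
  rw [Cg, dif_pos h]
  exact h.choose_spec

theorem cg_le {X : C} (hmc : MonoCompleteAt X) {T : Set (⊤_ C ⟶ X)} {S : Subobject X}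
    (h : ∀ p ∈ T, S.Factors p) : Cg T ≤ S := (isGLB_cg hmc T).1 h

theorem cg_factors_of_mem {X : C} (hmc : MonoCompleteAt X) {T : Set (⊤_ C ⟶ X)}
    {p : ⊤_ C ⟶ X} (hp : p ∈ T) : (Cg T).Factors p := by
  haveI := point_mono p
  have hlb : Subobject.mk p ∈ lowerBounds {S : Subobject X | ∀ q ∈ T, S.Factors q} := by
    intro S hS
    exact Subobject.mk_le_of_comm (S.factorThru p (hS p hp)) (S.factorThru_arrow p _)
  exact Subobject.factors_of_le p ((isGLB_cg hmc T).2 hlb) (Subobject.mk_factors_self p)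

theorem subset_cl {X : C} (hmc : MonoCompleteAt X) (T : Set (⊤_ C ⟶ X)) : T ⊆ cl T :=
  fun _ hp => cg_factors_of_mem hmc hp

theorem cl_mono {X : C} (hmc : MonoCompleteAt X) {T T' : Set (⊤_ C ⟶ X)} (h : T ⊆ T') :
    cl T ⊆ cl T' := fun p hp =>
  Subobject.factors_of_le p (cg_le hmc fun _ hq => cg_factors_of_mem hmc (h hq)) hp

theorem sub_one_false [CoherentJoins C] (hnt : NonTrivialCat C) (hpt : EnoughPoints C)
    (hbot : IsBotIn (⊤ : Subobject (⊤_ C))) : False := by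
  have htriv : ∀ (Y : C) (S : Subobject Y), S = ⊤ := by
    intro Y S
    have h1 : IsBotIn ((Subobject.pullback (terminal.from Y)).obj ⊤) :=
      CoherentJoins.pullback_bot _ _ hbot
    rw [Subobject.pullback_top] at h1
    exact le_antisymm le_top (h1 S)
  have hiso : ∀ {A Y : C} (m : A ⟶ Y), Mono m → IsIso m := by
    intro A Y m hm
    haveI := hm
    exact (Subobject.isIso_iff_mk_eq_top m).mpr (htriv _ _)
  by_cases hI : ∀ Y : C, NonInitial Y
  · have hfromiso : ∀ Y : C, IsIso (terminal.from Y) := by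
      intro Y
      obtain ⟨se⟩ := hpt Y (hI Y)
      have hs : Mono se.section_ := ⟨fun g h _ => terminalIsTerminal.hom_ext g h⟩
      haveI : IsIso se.section_ := hiso _ hs
      have hcomp : se.section_ ≫ terminal.from Y = 𝟙 (⊤_ C) :=
        terminalIsTerminal.hom_ext _ _
      haveI : IsIso (se.section_ ≫ terminal.from Y) := by rw [hcomp]; infer_instance
      exact IsIso.of_isIso_comp_left se.section_ (terminal.from Y)
    have hinit : IsInitial (⊤_ C) := by
      refine IsInitial.ofUniqueHom (fun Y => haveI := hfromiso Y; inv (terminal.from Y)) ?_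
      intro Y m
      haveI := hfromiso Y
      have h1 : m ≫ terminal.from Y = 𝟙 (⊤_ C) := terminalIsTerminal.hom_ext _ _
      calc m = m ≫ terminal.from Y ≫ inv (terminal.from Y) := by simp
        _ = inv (terminal.from Y) := by rw [← Category.assoc, h1, Category.id_comp]
    exact hnt _ hinit terminalIsTerminal
  · rw [not_forall] at hI
    obtain ⟨Y₀, h₀⟩ := hI
    have hinit : IsInitial Y₀ := Classical.choice (by
      by_contra hne; exact h₀ fun hi => hne ⟨hi⟩)
    have hmono : Mono (diag Y₀) := ⟨fun {Z} g h H => by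
      have := congrArg (fun t => t ≫ (prod.fst : Y₀ ⨯ Y₀ ⟶ Y₀)) H
      simpa [prod.lift_fst] using this⟩
    haveI : IsIso (diag Y₀) := hiso _ hmono
    have hfst : (prod.fst : Y₀ ⨯ Y₀ ⟶ Y₀) = prod.snd := by
      have h1 : diag Y₀ ≫ prod.fst = diag Y₀ ≫ prod.snd := by simp [prod.lift_fst, prod.lift_snd]
      exact (cancel_epi (diag Y₀)).mp h1
    have hsub : ∀ {Z : C} (f g : Z ⟶ Y₀), f = g := by
      intro Z f g
      have : prod.lift f g ≫ prod.fst = prod.lift f g ≫ prod.snd := by rw [hfst]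
      simpa [prod.lift_fst, prod.lift_snd] using this
    have hm : Mono (terminal.from Y₀) := ⟨fun g h _ => hsub g h⟩
    haveI : IsIso (terminal.from Y₀) := hiso _ hm
    exact hnt Y₀ hinit (IsTerminal.ofIso terminalIsTerminal (asIso (terminal.from Y₀)).symm)

theorem sub_one_dichotomy (hpt : EnoughPoints C) (V : Subobject (⊤_ C)) :
    V.Factors (𝟙 (⊤_ C)) ∨ IsBotIn V := by
  by_cases h : NonInitial ((V : C))
  · obtain ⟨se⟩ := hpt _ h
    left
    have hfac := Subobject.factors_comp_arrow (P := V) se.section_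
    rwa [terminalIsTerminal.hom_ext (se.section_ ≫ V.arrow) (𝟙 (⊤_ C))] at hfac
  · right
    have hinit : IsInitial ((V : C)) := Classical.choice (by
      by_contra hne; exact h fun hi => hne ⟨hi⟩)
    intro S
    exact Subobject.le_of_comm (hinit.to (S : C)) (hinit.hom_ext _ _)

theorem not_factors_bot [CoherentJoins C] (hnt : NonTrivialCat C) (hpt : EnoughPoints C)
    {X : C} {b : Subobject X} (hb : IsBotIn b) {p : ⊤_ C ⟶ X} (hf : b.Factors p) : False := by
  have h1 : ((Subobject.pullback p).obj b).Factors (𝟙 (⊤_ C)) :=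
    (factors_pullback_iff p b (𝟙 (⊤_ C))).mpr (by simpa using hf)
  have hb1 : IsBotIn ((Subobject.pullback p).obj b) := CoherentJoins.pullback_bot p b hb
  rw [eq_top_of_factors_id _ h1] at hb1
  exact sub_one_false hnt hpt hb1

theorem factors_sup_point [CoherentJoins C] (hnt : NonTrivialCat C) (hpt : EnoughPoints C)
    {X : C} {S S' U : Subobject X} (hU : IsLUB {S, S'} U) {p : ⊤_ C ⟶ X}
    (hp : U.Factors p) : S.Factors p ∨ S'.Factors p := by
  have hlub := CoherentJoins.pullback_sup p S S' U hU
  have hU1 : ((Subobject.pullback p).obj U).Factors (𝟙 (⊤_ C)) :=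
    (factors_pullback_iff p U (𝟙 (⊤_ C))).mpr (by simpa using hp)
  rcases sub_one_dichotomy hpt ((Subobject.pullback p).obj S) with h1 | h1
  · left
    have := (factors_pullback_iff p S (𝟙 (⊤_ C))).mp h1
    simpa using this
  rcases sub_one_dichotomy hpt ((Subobject.pullback p).obj S') with h2 | h2
  · right
    have := (factors_pullback_iff p S' (𝟙 (⊤_ C))).mp h2
    simpa using this
  exfalso
  have hSS : (Subobject.pullback p).obj S = (Subobject.pullback p).obj S' :=
    le_antisymm (h1 _) (h2 _)
  have hub : (Subobject.pullback p).obj S ∈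
      upperBounds {(Subobject.pullback p).obj S, (Subobject.pullback p).obj S'} := by
    rintro V (rfl | rfl)
    · exact le_refl _
    · exact le_of_eq hSS.symm
  have hle : (Subobject.pullback p).obj U ≤ (Subobject.pullback p).obj S := hlub.2 hub
  rw [eq_top_of_factors_id _ hU1] at hle
  exact sub_one_false hnt hpt fun V => le_trans hle (h1 V)

theorem cl_empty [CoherentJoins C] (hnt : NonTrivialCat C) (hpt : EnoughPoints C)
    {X : C} (hmc : MonoCompleteAt X) : cl (∅ : Set (⊤_ C ⟶ X)) = ∅ := by
  refine Set.eq_empty_iff_forall_notMem.mpr fun p hp => ?_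
  have hbot : IsBotIn (Cg (∅ : Set (⊤_ C ⟶ X))) := fun S =>
    cg_le hmc fun q hq => absurd hq (Set.notMem_empty q)
  exact not_factors_bot hnt hpt hbot hp

theorem cl_union [CoherentJoins C] (hnt : NonTrivialCat C) (hpt : EnoughPoints C)
    {X : C} (hmc : MonoCompleteAt X) {A B : Set (⊤_ C ⟶ X)} (hA : cl A = A) (hB : cl B = B) :
    cl (A ∪ B) = A ∪ B := by
  refine subset_antisymm ?_ (subset_cl hmc _)
  intro p hp
  obtain ⟨U, hU⟩ := CoherentJoins.exists_sup (Cg A) (Cg B)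
  have hCgA : Cg A ≤ U := hU.1 (Set.mem_insert _ _)
  have hCgB : Cg B ≤ U := hU.1 (Set.mem_insert_of_mem _ rfl)
  have h1 : Cg (A ∪ B) ≤ U := by
    refine cg_le hmc fun q hq => ?_
    rcases hq with hq | hq
    · exact Subobject.factors_of_le q hCgA (cg_factors_of_mem hmc hq)
    · exact Subobject.factors_of_le q hCgB (cg_factors_of_mem hmc hq)
  have hUp : U.Factors p := Subobject.factors_of_le p h1 hp
  rcases factors_sup_point hnt hpt hU hUp with h | h
  · exact Or.inl (hA ▸ h)
  · exact Or.inr (hB ▸ h)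

end WithLimits

theorem isClosed_ofClosed {α : Type w} (F : Set (Set α)) (h1 : ∅ ∈ F)
    (h2 : ∀ A, A ⊆ F → ⋂₀ A ∈ F) (h3 : ∀ A, A ∈ F → ∀ B, B ∈ F → A ∪ B ∈ F) (T : Set α) :
    @IsClosed _ (TopologicalSpace.ofClosed F h1 h2 h3) T ↔ T ∈ F := by
  letI := TopologicalSpace.ofClosed F h1 h2 h3
  rw [← isOpen_compl_iff]
  show Tᶜᶜ ∈ F ↔ T ∈ F
  rw [compl_compl]

end AuxLemmas

/-- The functor of points lifts to a faithful functor `Spec : 𝒳 → Top`: there are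
topologies on the sets of points whose closed sets are the fixed points of `cl`, for which
every `pt f` is continuous; moreover the resulting functor is faithful. -/
theorem spec_lifts_to_Top
    [WellPowered.{v} C] [HasFiniteLimits C] [HasImages C] [StableImages C] [CoherentJoins C]
    (hnt : NonTrivialCat C) (hwp : WellPointed C) (hpt : EnoughPoints C)
    (hmc : MonoComplete C) :
    ∃ t : ∀ X : C, TopologicalSpace (⊤_ C ⟶ X),
      (∀ (X : C) (T : Set (⊤_ C ⟶ X)), @IsClosed _ (t X) T ↔ cl T = T) ∧
      (∀ {X Y : C} (f : X ⟶ Y), @Continuous _ _ (t X) (t Y) fun p => p ≫ f) ∧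
      (∀ {X Y : C} (f g : X ⟶ Y),
        (fun p : ⊤_ C ⟶ X => p ≫ f) = (fun p : ⊤_ C ⟶ X => p ≫ g) → f = g) := by
  classical
  have hsInter : ∀ (X : C) (A : Set (Set (⊤_ C ⟶ X))),
      A ⊆ {T : Set (⊤_ C ⟶ X) | cl T = T} → cl (⋂₀ A) = ⋂₀ A := by
    intro X A hA
    refine subset_antisymm ?_ (subset_cl (hmc X) _)
    intro p hp
    refine Set.mem_sInter.mpr fun T hT => ?_
    have h1 : cl (⋂₀ A) ⊆ cl T := cl_mono (hmc X) (Set.sInter_subset_of_mem hT)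
    have h2 := h1 hp
    rwa [hA hT] at h2
  refine ⟨fun X => TopologicalSpace.ofClosed {T | cl T = T}
      (cl_empty hnt hpt (hmc X)) (hsInter X)
      (fun A hA B hB => cl_union hnt hpt (hmc X) hA hB),
    fun X T => isClosed_ofClosed _ _ _ _ T, ?_, ?_⟩
  · -- continuity
    intro X Y f
    letI tX : TopologicalSpace (⊤_ C ⟶ X) := TopologicalSpace.ofClosed {T | cl T = T}
      (cl_empty hnt hpt (hmc X)) (hsInter X)
      (fun A hA B hB => cl_union hnt hpt (hmc X) hA hB)
    letI tY : TopologicalSpace (⊤_ C ⟶ Y) := TopologicalSpace.ofClosed {T | cl T = T}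
      (cl_empty hnt hpt (hmc Y)) (hsInter Y)
      (fun A hA B hB => cl_union hnt hpt (hmc Y) hA hB)
    show @Continuous _ _ tX tY fun p : ⊤_ C ⟶ X => p ≫ f
    rw [continuous_iff_isClosed]
    intro T hT
    have hT' : cl T = T := by
      have h2 : Tᶜᶜ ∈ {T : Set (⊤_ C ⟶ Y) | cl T = T} := hT.isOpen_compl
      rwa [compl_compl] at h2
    refine { isOpen_compl := ?_ }
    show ((fun p : ⊤_ C ⟶ X => p ≫ f) ⁻¹' T)ᶜᶜ ∈ {T : Set (⊤_ C ⟶ X) | cl T = T}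
    rw [compl_compl]
    show cl ((fun p : ⊤_ C ⟶ X => p ≫ f) ⁻¹' T) = (fun p : ⊤_ C ⟶ X => p ≫ f) ⁻¹' T
    refine subset_antisymm ?_ (subset_cl (hmc X) _)
    intro p hp
    have hle : Cg ((fun p : ⊤_ C ⟶ X => p ≫ f) ⁻¹' T) ≤ (Subobject.pullback f).obj (Cg T) :=
      cg_le (hmc X) fun q hq =>
        (factors_pullback_iff f (Cg T) q).mpr (cg_factors_of_mem (hmc Y) hq)
    have h1 := Subobject.factors_of_le p hle hp
    have h2 := (factors_pullback_iff f (Cg T) p).mp h1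
    show p ≫ f ∈ T
    rw [← hT']
    exact h2
  · intro X Y f g h
    exact hwp f g fun p => congrFun h p

end Paper
end

section
/- Let 𝒳 be a non-trivial well-pointed coherent category in which the unique morphism X → 1 is a retraction for every X ≇ 0. Then for every object X of 𝒳, the atoms of the subobject lattice Sub(X) are precisely the subobjects represented by points 1 → X of X. -/
open CategoryTheory CategoryTheory.Limits Opposite

universe w' w v u

namespace Paper

variable {C : Type u} [Category.{v} C]

section AuxProof
variable [HasFiniteLimits C]

lemma isBotIn_of_initial {X : C} {T : Subobject X} (h : IsInitial (T : C)) : IsBotIn T :=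
  fun S => Subobject.le_of_comm (h.to _) (h.hom_ext _ _)

lemma not_isBotIn_point (hnt : NonTrivialCat C) (hwp : WellPointed C) (hpt : EnoughPoints C)
    {X : C} (p : ⊤_ C ⟶ X) [Mono p] : ¬ IsBotIn (Subobject.mk p) := by
  intro hb
  have key : ∀ {A : C} (m : A ⟶ ⊤_ C), Mono m → IsIso m := by
    intro A m hm
    let s := pullback.snd m (terminal.from X)
    have hle := hb (Subobject.mk s)
    let k : ⊤_ C ⟶ A :=
      (Subobject.underlyingIso p).inv ≫ Subobject.ofLE _ _ hle ≫
        (Subobject.underlyingIso s).hom ≫ pullback.fst m (terminal.from X)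
    haveI : IsSplitEpi m := ⟨⟨⟨k, Subsingleton.elim _ _⟩⟩⟩
    exact isIso_of_mono_of_isSplitEpi m
  have pts : ∀ {Z : C} (a b : ⊤_ C ⟶ Z), a = b := by
    intro Z a b
    haveI := key (equalizer.ι a b) inferInstance
    exact eq_of_epi_equalizer
  have par : ∀ {Y Z : C} (f g : Y ⟶ Z), f = g := fun f g =>
    hwp f g (fun q => pts _ _)
  have ex : ∀ Z : C, Nonempty (⊤_ C ⟶ Z) := by
    intro Z
    by_cases h : Nonempty (IsInitial Z)
    · haveI : Mono (terminal.from Z) := ⟨fun a b _ => par a b⟩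
      haveI := key (terminal.from Z) inferInstance
      exact ⟨inv (terminal.from Z)⟩
    · obtain ⟨se⟩ := hpt Z (fun hi => h ⟨hi⟩)
      exact ⟨se.section_⟩
  have hinit : IsInitial (⊤_ C) :=
    IsInitial.ofUniqueHom (fun Z => (ex Z).some) (fun Z m => par m _)
  exact hnt (⊤_ C) hinit terminalIsTerminal

end AuxProof

/-- The atoms of `Sub(X)` are precisely the subobjects represented by points `1 ⟶ X`. -/
theorem atoms_eq_points
    [WellPowered.{v} C] [HasFiniteLimits C] [HasImages C] [StableImages C] [CoherentJoins C]
    (hnt : NonTrivialCat C) (hwp : WellPointed C) (hpt : EnoughPoints C)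
    (X : C) (S : Subobject X) :
    IsAtomIn S ↔ ∃ (p : ⊤_ C ⟶ X) (hp : Mono p), S = @Subobject.mk C _ X (⊤_ C) p hp := by
  constructor
  · rintro ⟨hnb, hmin⟩
    have hni : NonInitial (S : C) := fun hi => hnb (isBotIn_of_initial hi)
    obtain ⟨se⟩ := hpt _ hni
    have hq : Mono (se.section_ ≫ S.arrow) := by
      haveI : IsSplitMono (se.section_ ≫ S.arrow) :=
        ⟨⟨⟨terminal.from X, Subsingleton.elim _ _⟩⟩⟩
      infer_instance
    refine ⟨se.section_ ≫ S.arrow, hq, ?_⟩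
    have hle : Subobject.mk (se.section_ ≫ S.arrow) ≤ S :=
      Subobject.mk_le_of_comm se.section_ rfl
    rcases lt_or_eq_of_le hle with hlt | heq
    · exact absurd (hmin _ hlt) (not_isBotIn_point hnt hwp hpt _)
    · exact heq.symm
  · rintro ⟨p, hp, rfl⟩
    refine ⟨not_isBotIn_point hnt hwp hpt p, fun T hT => ?_⟩
    by_cases h : Nonempty (IsInitial (T : C))
    · exact isBotIn_of_initial h.some
    · exfalso
      obtain ⟨se⟩ := hpt _ (fun hi => h ⟨hi⟩)
      apply hT.not_ge
      refine Subobject.mk_le_of_comm se.section_ ?_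
      have harr : T.arrow = Subobject.ofLE _ _ hT.le ≫ (Subobject.mk p).arrow := by simp
      calc se.section_ ≫ T.arrow
          = (se.section_ ≫ Subobject.ofLE _ _ hT.le ≫ (Subobject.underlyingIso p).hom) ≫
              ((Subobject.underlyingIso p).inv ≫ (Subobject.mk p).arrow) := by
            rw [harr]
            simp only [Category.assoc, Iso.hom_inv_id_assoc]
        _ = 𝟙 _ ≫ p := by
            rw [Subobject.underlyingIso_arrow]
            congr 1
            exact Subsingleton.elim _ _
        _ = p := Category.id_comp p


end Paper
end

section
/- Let 𝒳 be a non-trivial positive and coherent category which is well-pointed. Then for every object X of 𝒳 not isomorphic to the initial object 0, the unique morphism X → 1 is a retraction; that is, every non-initial object of 𝒳 has a point. -/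
open CategoryTheory CategoryTheory.Limits Opposite

universe w' w v u

namespace Paper

variable {C : Type u} [Category.{v} C]

/-- In a non-trivial well-pointed positive coherent category, every non-initial object
has a point: the unique morphism `X ⟶ 1` is a retraction. -/
theorem positive_enoughPoints
    [WellPowered.{v} C] [HasFiniteLimits C] [HasImages C] [StableImages C] [CoherentJoins C]
    [HasFiniteCoproducts C] [BinaryCoproductsDisjoint C]
    (hnt : NonTrivialCat C) (hwp : WellPointed C) :
    EnoughPoints C := by
  intro X hX
  by_contra hempty
  have hno : ∀ p : ⊤_ C ⟶ X, False := by
    intro p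
    exact hempty ⟨⟨p, Subsingleton.elim _ _⟩⟩
  have h : (coprod.inl : X ⟶ X ⨿ X) = coprod.inr :=
    hwp _ _ (fun p => (hno p).elim)
  have comm : (𝟙 X) ≫ (coprod.inl : X ⟶ X ⨿ X) = 𝟙 X ≫ coprod.inr := by rw [h]
  have cZ : IsLimit (PullbackCone.mk (𝟙 X) (𝟙 X) comm) := by
    refine PullbackCone.IsLimit.mk _ (fun s => s.fst) (fun s => by simp) (fun s => ?_)
      (fun s m h1 h2 => by simpa using h1)
    have this2 : s.fst ≫ (coprod.inl : X ⟶ X ⨿ X) = s.snd ≫ coprod.inl := by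
      exact s.condition.trans (congrArg (fun k => s.snd ≫ k) h.symm)
    simpa using (cancel_mono (coprod.inl : X ⟶ X ⨿ X)).mp this2
  exact hX (IsInitial.ofBinaryCoproductDisjointOfIsLimit _ cZ)

end Paper
end
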